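/- Let n ≥ 1 and let D = {z ∈ {0,1}^n : |z| ≥ n−1}, where |z| is the Hamming weight, and let F : D → {0,1} be the AND function (F(z) = 1 iff z = 1^n). For j ∈ [n] define ψ_j : D → ℝ by ψ_j(1^n) = n^{−1/4}; ψ_j(z) = n^{1/4} if |z| = n−1 and z_j = 0; and ψ_j(z) = 0 if |z| = n−1 and z_j = 1. Then the rank-one positive semidefinite matrices X_j = ψ_j ψ_j^T satisfy: for all x, y ∈ D with F(x) ≠ F(y), ∑_{j : x_j ≠ y_j} X_j[x,y] = 1; and for every z ∈ D, ∑_{j∈[n]} X_j[z,z] = √n. -/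

import Mathlib

open scoped Classical

/-- The domain `D = {z ∈ {0,1}^n : |z| ≥ n-1}`, where `|z|` is the Hamming weight. -/
abbrev DsetAND (n : ℕ) :=
  {z : Fin n → Bool // n - 1 ≤ (Finset.univ.filter (fun i => z i = true)).card}

/-- The vector `ψ_j` on `D`: `ψ_j(1^n) = n^{-1/4}`; `ψ_j(z) = n^{1/4}` if `|z| = n-1` and
`z_j = 0`; and `ψ_j(z) = 0` if `|z| = n-1` and `z_j = 1`. -/
noncomputable def psiAND (n : ℕ) (j : Fin n) (z : DsetAND n) : ℝ :=
  if ∀ i, z.1 i = true then (n:ℝ) ^ (-(1/4 : ℝ))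
  else if z.1 j = false then (n:ℝ) ^ ((1/4 : ℝ))
  else 0

lemma uniq_false_aux (n : ℕ) (z : DsetAND n) (j0 : Fin n) (h : z.1 j0 = false) :
    ∀ i : Fin n, i ≠ j0 → z.1 i = true := by
  intro i hi
  by_contra hne
  have hi' : z.1 i = false := by simpa using hne
  have hsub : Finset.univ.filter (fun k => z.1 k = true) ⊆ Finset.univ \ {i, j0} := by
    intro k hk
    simp only [Finset.mem_filter] at hk
    simp only [Finset.mem_sdiff, Finset.mem_univ, Finset.mem_insert, Finset.mem_singleton,
      true_and]
    rintro (rfl | rfl) <;> simp_all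
  have hcard2 : ({i, j0} : Finset (Fin n)).card = 2 := by
    rw [Finset.card_insert_of_notMem (by simpa using hi), Finset.card_singleton]
  have hle : (Finset.univ.filter (fun k => z.1 k = true)).card ≤ n - 2 := by
    calc (Finset.univ.filter (fun k => z.1 k = true)).card
        ≤ (Finset.univ \ {i, j0}).card := Finset.card_le_card hsub
      _ = n - 2 := by
          rw [Finset.card_sdiff_of_subset (by simp), hcard2, Finset.card_univ, Fintype.card_fin]
  have h2 : 2 ≤ n := by
    have := Finset.card_le_card (Finset.subset_univ ({i, j0} : Finset (Fin n)))
    rw [hcard2, Finset.card_univ, Fintype.card_fin] at this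
    exact this
  have := z.2
  omega

/- `F` is the AND function on `D`: `F(z) = 1` iff `z = 1^n`; the condition `F x ≠ F y` is
expressed as `¬((∀ i, x i) ↔ (∀ i, y i))`. -/
theorem stmt16 (n : ℕ) (hn : 1 ≤ n) :
    (∀ j : Fin n,
      (Matrix.of (fun x y : DsetAND n => psiAND n j x * psiAND n j y)).PosSemidef) ∧
    (∀ x y : DsetAND n, ¬((∀ i, x.1 i = true) ↔ (∀ i, y.1 i = true)) →
      ∑ j ∈ Finset.univ.filter (fun j : Fin n => x.1 j ≠ y.1 j),
        psiAND n j x * psiAND n j y = 1) ∧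
    (∀ z : DsetAND n, ∑ j : Fin n, psiAND n j z * psiAND n j z = Real.sqrt n) := by
  have hnpos : (0:ℝ) < (n:ℝ) := by exact_mod_cast hn
  have hmul1 : (n:ℝ) ^ (-(1/4 : ℝ)) * (n:ℝ) ^ ((1/4 : ℝ)) = 1 := by
    rw [← Real.rpow_add hnpos]; norm_num
  refine ⟨?_, ?_, ?_⟩
  · intro j
    rw [Matrix.posSemidef_iff_dotProduct_mulVec]
    constructor
    · ext x y
      simp [Matrix.conjTranspose, mul_comm]
    · intro v
      have key : dotProduct (star v) ((Matrix.of
          (fun x y : DsetAND n => psiAND n j x * psiAND n j y)).mulVec v)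
          = (∑ z, psiAND n j z * v z) ^ 2 := by
        rw [sq, Finset.sum_mul_sum]
        simp only [dotProduct, Matrix.mulVec, Matrix.of_apply, Pi.star_apply,
          star_trivial, Finset.mul_sum]
        exact Finset.sum_congr rfl fun x _ => Finset.sum_congr rfl fun y _ => by ring
      rw [key]
      positivity
  · intro x y hxy
    rcases Classical.em (∀ i, x.1 i = true) with hx | hx
    · have hy : ¬ ∀ i, y.1 i = true := fun h => hxy ⟨fun _ => h, fun _ => hx⟩
      obtain ⟨j0, hj0⟩ : ∃ j0, y.1 j0 = false := by
        push_neg at hy; obtain ⟨j0, hj0⟩ := hy; exact ⟨j0, by simpa using hj0⟩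
      have hfilter : Finset.univ.filter (fun j : Fin n => x.1 j ≠ y.1 j) = {j0} := by
        ext j
        simp only [Finset.mem_filter, Finset.mem_univ, true_and, Finset.mem_singleton]
        constructor
        · intro hne
          by_contra hjj
          exact hne (by rw [hx j, uniq_false_aux n y j0 hj0 j hjj])
        · intro hjeq
          rw [hjeq, hx j0, hj0]; simp
      rw [hfilter, Finset.sum_singleton]
      simp only [psiAND, if_pos hx, if_neg hy, hj0, if_true]
      exact hmul1
    · have hy : ∀ i, y.1 i = true := by
        by_contra hy; exact hxy ⟨fun h => absurd h hx, fun h => absurd h hy⟩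
      obtain ⟨j0, hj0⟩ : ∃ j0, x.1 j0 = false := by
        push_neg at hx; obtain ⟨j0, hj0⟩ := hx; exact ⟨j0, by simpa using hj0⟩
      have hfilter : Finset.univ.filter (fun j : Fin n => x.1 j ≠ y.1 j) = {j0} := by
        ext j
        simp only [Finset.mem_filter, Finset.mem_univ, true_and, Finset.mem_singleton]
        constructor
        · intro hne
          by_contra hjj
          exact hne (by rw [hy j, uniq_false_aux n x j0 hj0 j hjj])
        · intro hjeq
          rw [hjeq, hy j0, hj0]; simp
      rw [hfilter, Finset.sum_singleton]
      simp only [psiAND, if_pos hy, if_neg hx, hj0, if_true]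
      rw [mul_comm]; exact hmul1
  · intro z
    rcases Classical.em (∀ i, z.1 i = true) with hz | hz
    · have : ∀ j : Fin n, psiAND n j z * psiAND n j z = (n:ℝ) ^ (-(1/2 : ℝ)) := by
        intro j
        simp only [psiAND, if_pos hz]
        rw [← Real.rpow_add hnpos]; norm_num
      rw [Finset.sum_congr rfl (fun j _ => this j), Finset.sum_const, Finset.card_univ,
        Fintype.card_fin, nsmul_eq_mul]
      rw [Real.sqrt_eq_rpow]
      nth_rewrite 1 [show (n:ℝ) = (n:ℝ) ^ (1:ℝ) by rw [Real.rpow_one]]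
      rw [← Real.rpow_add hnpos]; norm_num
    · obtain ⟨j0, hj0⟩ : ∃ j0, z.1 j0 = false := by
        push_neg at hz; obtain ⟨j0, hj0⟩ := hz; exact ⟨j0, by simpa using hj0⟩
      rw [Finset.sum_eq_single j0]
      · simp only [psiAND, if_neg hz, hj0, if_true]
        rw [← Real.rpow_add hnpos, Real.sqrt_eq_rpow]; norm_num
      · intro j _ hjj
        have := uniq_false_aux n z j0 hj0 j hjj
        simp [psiAND, if_neg hz, this]
      · intro h; exact absurd (Finset.mem_univ j0) h
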